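/- arXiv:1909.02911 — 3 statements merged into one kernel-verified Lean document; each statement's English description precedes it below -/
import Mathlib

section
/- There do not exist: a graphon W₁ on [0,1] with increasing degree function D₁, a probability space (Ω,μ), and measure-preserving maps φ, ψ : Ω → [0,1] such that W(φ(x),φ(y)) = W₁(ψ(x),ψ(y)) for μ²-a.e. (x,y), where W(x,y) = 4xy on (0,1/2)², = 1/2 when x+y > 3/2, = 0 otherwise. -/
open MeasureTheory Set

/-- A graphon on `[0,1]` (represented as a function on all of `ℝ`):
a symmetric measurable function with values in `[0,1]`. -/
def IsGraphon (U : ℝ → ℝ → ℝ) : Prop :=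
  Measurable (Function.uncurry U) ∧ (∀ x y, U x y = U y x) ∧
    ∀ x y, U x y ∈ Set.Icc (0:ℝ) 1

/-- The example graphon. -/
noncomputable def W (x y : ℝ) : ℝ :=
  if x ∈ Set.Ioo (0:ℝ) (1/2) ∧ y ∈ Set.Ioo (0:ℝ) (1/2) then 4 * x * y
  else if x + y > 3/2 then 1/2 else 0

noncomputable def Deg (U : ℝ → ℝ → ℝ) (x : ℝ) : ℝ := ∫ y in Set.Icc (0:ℝ) 1, U x y

noncomputable def E2 (U : ℝ → ℝ → ℝ) (x : ℝ) : ℝ := ∫ y in Set.Icc (0:ℝ) 1, U x y * Deg U y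

lemma measurable_uncurry_W : Measurable (Function.uncurry W) := by
  have : Function.uncurry W = fun p : ℝ × ℝ =>
      if p ∈ (Set.Ioo (0:ℝ) (1/2)) ×ˢ (Set.Ioo (0:ℝ) (1/2)) then 4 * p.1 * p.2
      else if p ∈ {q : ℝ × ℝ | 3/2 < q.1 + q.2} then 1/2 else 0 := by
    ext p; simp [Function.uncurry, W, Set.mem_prod, gt_iff_lt, Set.mem_setOf_eq]
  rw [this]
  apply Measurable.ite (measurableSet_Ioo.prod measurableSet_Ioo)
  · exact ((measurable_const.mul measurable_fst).mul measurable_snd)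
  · apply Measurable.ite _ measurable_const measurable_const
    exact measurableSet_lt measurable_const (measurable_fst.add measurable_snd)

lemma measurable_Deg (U : ℝ → ℝ → ℝ) (hU : Measurable (Function.uncurry U)) :
    Measurable (Deg U) := by
  have := (hU.stronglyMeasurable.integral_prod_right'
    (ν := volume.restrict (Set.Icc (0:ℝ) 1)))
  exact this.measurable

lemma measurable_E2 (U : ℝ → ℝ → ℝ) (hU : Measurable (Function.uncurry U)) :
    Measurable (E2 U) := by
  have hm : Measurable (fun p : ℝ × ℝ => U p.1 p.2 * Deg U p.2) :=
    hU.mul ((measurable_Deg U hU).comp measurable_snd)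
  have := (hm.stronglyMeasurable.integral_prod_right'
    (ν := volume.restrict (Set.Icc (0:ℝ) 1)))
  exact this.measurable

-- W on low rows
lemma W_low {u : ℝ} (hu : u ∈ Set.Ioo (0:ℝ) (1/2)) (y : ℝ) (hy : y ∈ Set.Icc (0:ℝ) 1) :
    W u y = Set.indicator (Set.Ioo (0:ℝ) (1/2)) (fun y => 4 * u * y) y := by
  unfold W
  by_cases h : y ∈ Set.Ioo (0:ℝ) (1/2)
  · rw [if_pos ⟨hu, h⟩, Set.indicator_of_mem h]
  · have h2 : ¬ (u + y > 3/2 : Prop) := by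
      simp only [gt_iff_lt, not_lt]
      have := hu.2; have := hy.2; linarith
    rw [if_neg (fun hc => h hc.2), if_neg h2, Set.indicator_of_notMem h]

-- W on high rows
lemma W_high {u : ℝ} (hu : u ∈ Set.Icc (1/2:ℝ) 1) (y : ℝ) :
    W u y = Set.indicator (Set.Ioi (3/2 - u)) (fun _ => (1/2:ℝ)) y := by
  unfold W
  have h1 : u ∉ Set.Ioo (0:ℝ) (1/2) := by
    intro h; exact absurd h.2 (not_lt.mpr hu.1)
  by_cases h : 3/2 - u < y
  · have h2 : (u + y > 3/2 : Prop) := by simp only [gt_iff_lt]; linarith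
    rw [if_neg (fun hc => h1 hc.1), if_pos h2, Set.indicator_of_mem (Set.mem_Ioi.mpr h)]
  · have h2 : ¬ (u + y > 3/2 : Prop) := by
      simp only [gt_iff_lt, not_lt] at h ⊢; linarith
    have h3 : y ∉ Set.Ioi (3/2 - u) := by simpa using h
    rw [if_neg (fun hc => h1 hc.1), if_neg h2, Set.indicator_of_notMem h3]

lemma Deg_low {u : ℝ} (hu : u ∈ Set.Ioo (0:ℝ) (1/2)) : Deg W u = u / 2 := by
  unfold Deg
  rw [setIntegral_congr_fun measurableSet_Icc (fun y hy => W_low hu y hy)]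
  rw [setIntegral_indicator measurableSet_Ioo]
  have : Set.Icc (0:ℝ) 1 ∩ Set.Ioo (0:ℝ) (1/2) = Set.Ioo (0:ℝ) (1/2) := by
    apply Set.inter_eq_self_of_subset_right
    exact fun x hx => ⟨hx.1.le, by linarith [hx.2]⟩
  rw [this, ← integral_Ioc_eq_integral_Ioo, ← intervalIntegral.integral_of_le (by norm_num)]
  have h4 : (fun y : ℝ => 4*u*y) = fun y : ℝ => 4*u*y^1 := by ext y; ring
  rw [h4, intervalIntegral.integral_const_mul, integral_pow]
  norm_num
  ring

lemma Deg_high {u : ℝ} (hu : u ∈ Set.Icc (1/2:ℝ) 1) : Deg W u = (u - 1/2) / 2 := by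
  unfold Deg
  rw [setIntegral_congr_fun measurableSet_Icc (fun y _ => W_high hu y)]
  rw [setIntegral_indicator measurableSet_Ioi]
  have h1 : Set.Icc (0:ℝ) 1 ∩ Set.Ioi (3/2 - u) = Set.Ioc (3/2 - u) 1 := by
    ext y
    constructor
    · rintro ⟨⟨_, hy1⟩, hy2⟩; exact ⟨hy2, hy1⟩
    · rintro ⟨hy1, hy2⟩
      have := hu.1; have := hu.2
      exact ⟨⟨by linarith, hy2⟩, hy1⟩
  rw [h1]
  rw [setIntegral_const]
  rw [measureReal_def, Real.volume_Ioc]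
  rw [ENNReal.toReal_ofReal (by linarith [hu.1, hu.2])]
  rw [smul_eq_mul]
  ring

lemma E2_low {u : ℝ} (hu : u ∈ Set.Ioo (0:ℝ) (1/2)) : E2 W u = u / 12 := by
  unfold E2
  have key : ∀ y ∈ Set.Icc (0:ℝ) 1,
      W u y * Deg W y = Set.indicator (Set.Ioo (0:ℝ) (1/2)) (fun y => 2 * u * y ^ 2) y := by
    intro y hy
    by_cases h : y ∈ Set.Ioo (0:ℝ) (1/2)
    · rw [Set.indicator_of_mem h, W_low hu y hy, Set.indicator_of_mem h, Deg_low h]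
      ring
    · rw [Set.indicator_of_notMem h, W_low hu y hy, Set.indicator_of_notMem h, zero_mul]
  rw [setIntegral_congr_fun measurableSet_Icc key]
  rw [setIntegral_indicator measurableSet_Ioo]
  have : Set.Icc (0:ℝ) 1 ∩ Set.Ioo (0:ℝ) (1/2) = Set.Ioo (0:ℝ) (1/2) := by
    apply Set.inter_eq_self_of_subset_right
    exact fun x hx => ⟨hx.1.le, by linarith [hx.2]⟩
  rw [this, ← integral_Ioc_eq_integral_Ioo, ← intervalIntegral.integral_of_le (by norm_num)]
  simp only [intervalIntegral.integral_const_mul]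
  rw [integral_pow]
  norm_num
  ring

lemma E2_high {u : ℝ} (hu : u ∈ Set.Ioo (1/2:ℝ) 1) :
    E2 W u = (3/2 - u) * (u - 1/2) / 8 := by
  unfold E2
  have hu' : u ∈ Set.Icc (1/2:ℝ) 1 := ⟨hu.1.le, hu.2.le⟩
  have key : ∀ y ∈ Set.Icc (0:ℝ) 1,
      W u y * Deg W y = Set.indicator (Set.Ioi (3/2 - u)) (fun y => (y - 1/2) / 4) y := by
    intro y hy
    by_cases h : y ∈ Set.Ioi (3/2 - u)
    · have hy2 : y ∈ Set.Icc (1/2:ℝ) 1 := by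
        constructor
        · have := hu.2; have : (1/2:ℝ) < 3/2 - u := by linarith
          linarith [Set.mem_Ioi.mp h]
        · exact hy.2
      rw [W_high hu' y, Set.indicator_of_mem h, Set.indicator_of_mem h, Deg_high hy2]
      ring
    · rw [W_high hu' y, Set.indicator_of_notMem h, Set.indicator_of_notMem h, zero_mul]
  rw [setIntegral_congr_fun measurableSet_Icc key]
  rw [setIntegral_indicator measurableSet_Ioi]
  have h1 : Set.Icc (0:ℝ) 1 ∩ Set.Ioi (3/2 - u) = Set.Ioc (3/2 - u) 1 := by
    ext y
    constructor
    · rintro ⟨⟨_, hy1⟩, hy2⟩; exact ⟨hy2, hy1⟩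
    · rintro ⟨hy1, hy2⟩
      have := hu.1; have := hu.2
      exact ⟨⟨by linarith, hy2⟩, hy1⟩
  rw [h1, ← intervalIntegral.integral_of_le (by linarith [hu.1, hu.2] : (3/2 - u : ℝ) ≤ 1)]
  have : ∀ y : ℝ, (y - 1/2) / 4 = y / 4 - 1/8 := fun y => by ring
  simp only [this]
  rw [intervalIntegral.integral_sub (by apply IntervalIntegrable.div_const; exact intervalIntegral.intervalIntegrable_id) intervalIntegrable_const]
  rw [intervalIntegral.integral_div]
  rw [integral_id]
  rw [intervalIntegral.integral_const]
  rw [smul_eq_mul]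
  ring

lemma Deg_W_zero : Deg W 0 = 0 := by
  unfold Deg
  rw [setIntegral_congr_fun measurableSet_Icc (g := fun _ => (0:ℝ))]
  · simp
  · intro y hy
    unfold W
    have h1 : (0:ℝ) ∉ Set.Ioo (0:ℝ) (1/2) := by simp
    have h2 : ¬ ((0:ℝ) + y > 3/2 : Prop) := by
      simp only [gt_iff_lt, not_lt]; linarith [hy.2]
    rw [if_neg (fun hc => h1 hc.1), if_neg h2]

lemma Deg_W_dist {d : ℝ} (hd : d ∈ Set.Ioo (0:ℝ) (1/4)) :
    volume {u ∈ Set.Icc (0:ℝ) 1 | Deg W u ≤ d} = ENNReal.ofReal (4*d) := by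
  obtain ⟨hd0, hd1⟩ := hd
  have hset : {u ∈ Set.Icc (0:ℝ) 1 | Deg W u ≤ d}
      = insert 0 (Set.Ioc 0 (2*d) ∪ Set.Icc (1/2) (1/2 + 2*d)) := by
    ext u
    simp only [Set.mem_setOf_eq, Set.mem_insert_iff, Set.mem_union, Set.mem_Ioc, Set.mem_Icc,
      Set.mem_Ioo]
    constructor
    · rintro ⟨⟨hu0, hu1⟩, hdeg⟩
      rcases eq_or_lt_of_le hu0 with h0 | h0
      · exact Or.inl h0.symm
      · by_cases hu : u < 1/2
        · rw [Deg_low ⟨h0, hu⟩] at hdeg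
          exact Or.inr (Or.inl ⟨h0, by linarith⟩)
        · push_neg at hu
          rw [Deg_high ⟨hu, hu1⟩] at hdeg
          exact Or.inr (Or.inr ⟨hu, by linarith⟩)
    · rintro (h0 | ⟨hu0, hu1⟩ | ⟨hu0, hu1⟩)
      · subst h0; exact ⟨⟨le_refl _, by norm_num⟩, by rw [Deg_W_zero]; linarith⟩
      · have huh : u < 1/2 := by linarith
        refine ⟨⟨hu0.le, by linarith⟩, ?_⟩
        rw [Deg_low ⟨hu0, huh⟩]; linarith
      · refine ⟨⟨by linarith, by linarith⟩, ?_⟩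
        rw [Deg_high ⟨hu0, by linarith⟩]; linarith
  rw [hset, Set.insert_eq]
  have h1 : volume ({(0:ℝ)} ∪ (Set.Ioc 0 (2*d) ∪ Set.Icc (1/2) (1/2 + 2*d)))
      = volume (Set.Ioc 0 (2*d) ∪ Set.Icc (1/2) (1/2 + 2*d)) := by
    refine le_antisymm ((measure_union_le _ _).trans ?_) (measure_mono Set.subset_union_right)
    simp
  rw [h1]
  have hdisj : Disjoint (Set.Ioc 0 (2*d)) (Set.Icc (1/2:ℝ) (1/2 + 2*d)) := by
    rw [Set.disjoint_left]
    rintro u ⟨_, hu2⟩ ⟨hu3, _⟩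
    linarith
  rw [measure_union hdisj measurableSet_Icc, Real.volume_Ioc, Real.volume_Icc,
    ← ENNReal.ofReal_add (by linarith) (by linarith)]
  congr 1
  ring

lemma mono_det (f : ℝ → ℝ) (hf : MonotoneOn f (Set.Icc 0 1))
    (hd : ∀ d ∈ Set.Ioo (0:ℝ) (1/4),
      volume {u ∈ Set.Icc (0:ℝ) 1 | f u ≤ d} = ENNReal.ofReal (4*d)) :
    ∀ x ∈ Set.Ioo (0:ℝ) 1, f x = x/4 := by
  intro x hx
  obtain ⟨hx0, hx1⟩ := hx
  refine le_antisymm ?_ ?_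
  · by_contra hlt
    push_neg at hlt
    set d := (x/4 + min (f x) (1/4))/2 with hdef
    have hmin : x/4 < min (f x) (1/4) := lt_min hlt (by linarith)
    have hd1 : x/4 < d := by rw [hdef]; linarith
    have hd2 : d < 1/4 := by
      have : min (f x) (1/4) ≤ 1/4 := min_le_right _ _
      rw [hdef]; linarith
    have hd3 : d < f x := by
      have : min (f x) (1/4) ≤ f x := min_le_left _ _
      rw [hdef]; linarith
    have hdIoo : d ∈ Set.Ioo (0:ℝ) (1/4) := ⟨by linarith, hd2⟩
    have hsub : {u ∈ Set.Icc (0:ℝ) 1 | f u ≤ d} ⊆ Set.Icc 0 x := by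
      rintro u ⟨⟨hu0, hu1⟩, hfu⟩
      refine ⟨hu0, ?_⟩
      by_contra hux
      push_neg at hux
      have : f x ≤ f u := hf ⟨hx0.le, hx1.le⟩ ⟨hu0, hu1⟩ hux.le
      linarith
    have := measure_mono (μ := volume) hsub
    rw [hd d hdIoo, Real.volume_Icc] at this
    have h4 := (ENNReal.ofReal_le_ofReal_iff (by linarith)).mp this
    linarith
  · by_contra hlt
    push_neg at hlt
    set d := (max (f x) 0 + x/4)/2 with hdef
    have hmax : max (f x) 0 < x/4 := max_lt hlt (by linarith)
    have hd0 : 0 < d := by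
      have : (0:ℝ) ≤ max (f x) 0 := le_max_right _ _
      rw [hdef]; linarith
    have hd1 : d < x/4 := by rw [hdef]; linarith
    have hd2 : f x ≤ d := by
      have : f x ≤ max (f x) 0 := le_max_left _ _
      rw [hdef]; linarith
    have hdIoo : d ∈ Set.Ioo (0:ℝ) (1/4) := ⟨hd0, by linarith⟩
    have hsub : Set.Icc 0 x ⊆ {u ∈ Set.Icc (0:ℝ) 1 | f u ≤ d} := by
      rintro u ⟨hu0, hux⟩
      have huI : u ∈ Set.Icc (0:ℝ) 1 := ⟨hu0, by linarith⟩
      refine ⟨huI, ?_⟩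
      have : f u ≤ f x := hf huI ⟨hx0.le, hx1.le⟩ hux
      linarith
    have := measure_mono (μ := volume) hsub
    rw [hd d hdIoo, Real.volume_Icc] at this
    have h4 := (ENNReal.ofReal_le_ofReal_iff (by linarith)).mp this
    linarith

/-- There is no graphon equivalent to `W` (in the sense of a common pull-back)
whose degree function is weakly increasing. -/
theorem stmt11 :
    ¬ ∃ (W₁ : ℝ → ℝ → ℝ), IsGraphon W₁ ∧
      MonotoneOn (fun x => ∫ y in Set.Icc (0:ℝ) 1, W₁ x y) (Set.Icc (0:ℝ) 1) ∧
      ∃ (Ω : Type) (_ : MeasurableSpace Ω) (μ : Measure Ω), IsProbabilityMeasure μ ∧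
        ∃ (φ ψ : Ω → ℝ),
          MeasurePreserving φ μ (volume.restrict (Set.Icc (0:ℝ) 1)) ∧
          MeasurePreserving ψ μ (volume.restrict (Set.Icc (0:ℝ) 1)) ∧
          ∀ᵐ p ∂(μ.prod μ), W (φ p.1) (φ p.2) = W₁ (ψ p.1) (ψ p.2) := by
  rintro ⟨W₁, ⟨hW₁meas, hW₁symm, hW₁mem⟩, hmono, Ω, mΩ, μ, hprob, φ, ψ, hφ, hψ, hae⟩
  have hν : IsProbabilityMeasure (volume.restrict (Set.Icc (0:ℝ) 1)) := by
    constructor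
    rw [Measure.restrict_apply_univ, Real.volume_Icc]
    norm_num
  -- measurability
  have hDW : Measurable (Deg W) := measurable_Deg W measurable_uncurry_W
  have hDW₁ : Measurable (Deg W₁) := measurable_Deg W₁ hW₁meas
  have hEW : Measurable (E2 W) := measurable_E2 W measurable_uncurry_W
  have hEW₁ : Measurable (E2 W₁) := measurable_E2 W₁ hW₁meas
  -- slice version of the a.e. hypothesis
  have hslice : ∀ᵐ x ∂μ, ∀ᵐ y ∂μ, W (φ x) (φ y) = W₁ (ψ x) (ψ y) :=
    Measure.ae_ae_of_ae_prod hae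
  -- Step A : degrees agree a.e.
  have hWsm : ∀ a : ℝ, AEStronglyMeasurable (fun y => W a y) (Measure.map φ μ) :=
    fun a => ((measurable_uncurry_W.comp (measurable_prodMk_left (x := a)))).aestronglyMeasurable
  have hW₁sm : ∀ a : ℝ, AEStronglyMeasurable (fun y => W₁ a y) (Measure.map ψ μ) :=
    fun a => ((hW₁meas.comp (measurable_prodMk_left (x := a)))).aestronglyMeasurable
  have hdeg : ∀ᵐ x ∂μ, Deg W (φ x) = Deg W₁ (ψ x) := by
    filter_upwards [hslice] with x hx
    have e1 : Deg W (φ x) = ∫ y, W (φ x) (φ y) ∂μ := by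
      unfold Deg
      rw [← hφ.map_eq, integral_map hφ.measurable.aemeasurable (hWsm (φ x))]
    have e2 : Deg W₁ (ψ x) = ∫ y, W₁ (ψ x) (ψ y) ∂μ := by
      unfold Deg
      rw [← hψ.map_eq, integral_map hψ.measurable.aemeasurable (hW₁sm (ψ x))]
    rw [e1, e2]
    exact integral_congr_ae hx
  -- Step B : second-order functions agree a.e.
  have hE2 : ∀ᵐ x ∂μ, E2 W (φ x) = E2 W₁ (ψ x) := by
    filter_upwards [hslice] with x hx
    have e1 : E2 W (φ x) = ∫ y, W (φ x) (φ y) * Deg W (φ y) ∂μ := by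
      unfold E2
      rw [← hφ.map_eq, integral_map hφ.measurable.aemeasurable
        (show AEStronglyMeasurable (fun y => W (φ x) y * Deg W y) (Measure.map φ μ) from
          ((measurable_uncurry_W.comp (measurable_prodMk_left (x := φ x))).mul
            hDW).aestronglyMeasurable)]
    have e2 : E2 W₁ (ψ x) = ∫ y, W₁ (ψ x) (ψ y) * Deg W₁ (ψ y) ∂μ := by
      unfold E2
      rw [← hψ.map_eq, integral_map hψ.measurable.aemeasurable
        (show AEStronglyMeasurable (fun y => W₁ (ψ x) y * Deg W₁ y) (Measure.map ψ μ) from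
          ((hW₁meas.comp (measurable_prodMk_left (x := ψ x))).mul
            hDW₁).aestronglyMeasurable)]
    rw [e1, e2]
    apply integral_congr_ae
    filter_upwards [hx, hdeg] with y hy1 hy2
    rw [hy1, hy2]
  -- the pair maps
  set P : ℝ → ℝ × ℝ := fun u => (Deg W u, E2 W u) with hPdef
  set P₁ : ℝ → ℝ × ℝ := fun u => (Deg W₁ u, E2 W₁ u) with hP₁def
  have hPmeas : Measurable P := hDW.prodMk hEW
  have hP₁meas : Measurable P₁ := hDW₁.prodMk hEW₁
  have hmapP : Measure.map P (volume.restrict (Set.Icc (0:ℝ) 1))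
      = Measure.map P₁ (volume.restrict (Set.Icc (0:ℝ) 1)) := by
    calc Measure.map P (volume.restrict (Set.Icc (0:ℝ) 1))
        = Measure.map P (Measure.map φ μ) := by rw [hφ.map_eq]
      _ = Measure.map (P ∘ φ) μ := Measure.map_map hPmeas hφ.measurable
      _ = Measure.map (P₁ ∘ ψ) μ := by
          apply Measure.map_congr
          filter_upwards [hdeg, hE2] with x h1 h2
          show P (φ x) = P₁ (ψ x)
          rw [hPdef, hP₁def]
          simp only [Prod.mk.injEq]
          exact ⟨h1, h2⟩
      _ = Measure.map P₁ (Measure.map ψ μ) := (Measure.map_map hP₁meas hψ.measurable).symm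
      _ = Measure.map P₁ (volume.restrict (Set.Icc (0:ℝ) 1)) := by rw [hψ.map_eq]
  -- degree distribution of W₁
  have hdist : ∀ d ∈ Set.Ioo (0:ℝ) (1/4),
      volume {u ∈ Set.Icc (0:ℝ) 1 | Deg W₁ u ≤ d} = ENNReal.ofReal (4*d) := by
    intro d hd
    have hGset : MeasurableSet ((Set.Iic d) ×ˢ (Set.univ : Set ℝ)) :=
      measurableSet_Iic.prod MeasurableSet.univ
    have hPpre : P ⁻¹' ((Set.Iic d) ×ˢ (Set.univ : Set ℝ)) = {u | Deg W u ≤ d} := by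
      ext u; simp [hPdef]
    have hP₁pre : P₁ ⁻¹' ((Set.Iic d) ×ˢ (Set.univ : Set ℝ)) = {u | Deg W₁ u ≤ d} := by
      ext u; simp [hP₁def]
    have heq := congrArg (fun m : Measure (ℝ × ℝ) => m ((Set.Iic d) ×ˢ (Set.univ : Set ℝ))) hmapP
    rw [Measure.map_apply hPmeas hGset, Measure.map_apply hP₁meas hGset, hPpre, hP₁pre,
      Measure.restrict_apply (measurableSet_le hDW measurable_const),
      Measure.restrict_apply (measurableSet_le hDW₁ measurable_const)] at heq
    have hsetW : {u | Deg W u ≤ d} ∩ Set.Icc 0 1 = {u ∈ Set.Icc (0:ℝ) 1 | Deg W u ≤ d} := by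
      ext u; simp [Set.mem_setOf_eq, and_comm]
    have hsetW₁ : {u | Deg W₁ u ≤ d} ∩ Set.Icc 0 1 = {u ∈ Set.Icc (0:ℝ) 1 | Deg W₁ u ≤ d} := by
      ext u; simp [Set.mem_setOf_eq, and_comm]
    rw [hsetW, hsetW₁] at heq
    rw [← heq, Deg_W_dist hd]
  -- identification of Deg W₁
  have hD₁ : ∀ x ∈ Set.Ioo (0:ℝ) 1, Deg W₁ x = x/4 := by
    apply mono_det (Deg W₁) _ hdist
    exact hmono
  -- the graph function
  set h : ℝ → ℝ := fun t => E2 W₁ (4*t) with hhdef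
  have hhmeas : Measurable h := hEW₁.comp (measurable_const.mul measurable_id)
  set G : Set (ℝ × ℝ) := {p | p.2 = h p.1} with hGdef
  have hGmeas : MeasurableSet G := measurableSet_eq_fun measurable_snd (hhmeas.comp measurable_fst)
  have hν1 : (volume.restrict (Set.Icc (0:ℝ) 1)) (P₁ ⁻¹' G) = 1 := by
    have hsub : Set.Ioo (0:ℝ) 1 ⊆ P₁ ⁻¹' G := by
      intro u hu
      show E2 W₁ u = h (Deg W₁ u)
      rw [hD₁ u hu, hhdef]
      show E2 W₁ u = E2 W₁ (4 * (u / 4))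
      congr 1
      ring
    refine le_antisymm prob_le_one ?_
    calc (1:ENNReal) = (volume.restrict (Set.Icc (0:ℝ) 1)) (Set.Ioo 0 1) := by
          rw [Measure.restrict_apply measurableSet_Ioo]
          rw [Set.inter_eq_self_of_subset_left Set.Ioo_subset_Icc_self, Real.volume_Ioo]
          norm_num
      _ ≤ _ := measure_mono hsub
  have hν2 : (volume.restrict (Set.Icc (0:ℝ) 1)) (P ⁻¹' G) = 1 := by
    rw [← Measure.map_apply hPmeas hGmeas, hmapP, Measure.map_apply hP₁meas hGmeas, hν1]
  -- the bad set is null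
  have hBadMeas : MeasurableSet {u : ℝ | E2 W u ≠ h (Deg W u)} :=
    (measurableSet_eq_fun hEW (hhmeas.comp hDW)).compl
  have hbad : volume ({u : ℝ | E2 W u ≠ h (Deg W u)} ∩ Set.Icc 0 1) = 0 := by
    have hcompl : (volume.restrict (Set.Icc (0:ℝ) 1)) ((P ⁻¹' G)ᶜ) = 0 := by
      rw [measure_compl (hPmeas hGmeas) (measure_ne_top _ _), hν2, measure_univ, tsub_self]
    have : (P ⁻¹' G)ᶜ = {u : ℝ | E2 W u ≠ h (Deg W u)} := by
      ext u; simp [hGdef, hPdef]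
    rw [this, Measure.restrict_apply hBadMeas] at hcompl
    exact hcompl
  set Bad := {u : ℝ | E2 W u ≠ h (Deg W u)} ∩ Set.Icc 0 1 with hBaddef
  have hbad' : volume ((fun u => u + 1/2) ⁻¹' Bad) = 0 := by
    rw [(measurePreserving_add_right volume (1/2:ℝ)).measure_preimage
      (hBadMeas.inter measurableSet_Icc).nullMeasurableSet]
    exact hbad
  -- find a good point
  have hgood : volume (Set.Ioo (0:ℝ) (1/2)
      \ (Bad ∪ (fun u => u + 1/2) ⁻¹' Bad ∪ {1/3})) ≠ 0 := by
    rw [measure_diff_null (measure_union_null (measure_union_null hbad hbad')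
      Real.volume_singleton)]
    rw [Real.volume_Ioo]
    norm_num
  obtain ⟨u, hu⟩ := nonempty_of_measure_ne_zero hgood
  obtain ⟨huI, huN⟩ := hu
  have hu0 : 0 < u := huI.1
  have hu2 : u < 1/2 := huI.2
  have huB : u ∉ Bad := fun hc => huN (Or.inl (Or.inl hc))
  have huB' : u + 1/2 ∉ Bad := fun hc => huN (Or.inl (Or.inr hc))
  have hu13 : u ≠ 1/3 := fun hc => huN (Or.inr (by simp [hc]))
  have huIcc : u ∈ Set.Icc (0:ℝ) 1 := ⟨hu0.le, by linarith⟩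
  have huIcc' : u + 1/2 ∈ Set.Icc (0:ℝ) 1 := ⟨by linarith, by linarith⟩
  have he1 : E2 W u = h (Deg W u) := by
    by_contra hc
    exact huB ⟨hc, huIcc⟩
  have he2 : E2 W (u + 1/2) = h (Deg W (u + 1/2)) := by
    by_contra hc
    exact huB' ⟨hc, huIcc'⟩
  have hdeq : Deg W u = Deg W (u + 1/2) := by
    rw [Deg_low ⟨hu0, hu2⟩, Deg_high ⟨by linarith, by linarith⟩]
    ring
  have hEeq : E2 W u = E2 W (u + 1/2) := by rw [he1, he2, hdeq]
  rw [E2_low ⟨hu0, hu2⟩, E2_high ⟨by linarith, by linarith⟩] at hEeq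
  have hfinal : u * (3*u - 1) = 0 := by linear_combination (24:ℝ) * hEeq
  rcases mul_eq_zero.mp hfinal with h0 | h0
  · exact absurd h0 hu0.ne'
  · apply hu13
    linarith
end

section
/- Let W be a graphon on [0,1] whose degree function D(x) = ∫₀¹ W(x,y) dy is strictly increasing, and let W₁ be a graphon on [0,1] with increasing degree function D₁ such that there exist a probability space (Ω,μ) and measure-preserving maps φ, ψ : Ω → [0,1] with D(φ(x)) = D₁(ψ(x)) for μ-a.e. x. Then D₁ = D almost everywhere on [0,1]. -/
open MeasureTheory Set

theorem stmt12 {Ω : Type*} [MeasurableSpace Ω] (μ : Measure Ω) [IsProbabilityMeasure μ]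
    (W W₁ : ℝ → ℝ → ℝ) (hW : IsGraphon W) (hW₁ : IsGraphon W₁)
    (D D₁ : ℝ → ℝ)
    (hD : ∀ x, D x = ∫ y in Set.Icc (0:ℝ) 1, W x y)
    (hD₁ : ∀ x, D₁ x = ∫ y in Set.Icc (0:ℝ) 1, W₁ x y)
    (hDstrict : StrictMonoOn D (Set.Icc (0:ℝ) 1))
    (hD₁mono : MonotoneOn D₁ (Set.Icc (0:ℝ) 1))
    (φ ψ : Ω → ℝ)
    (hφ : MeasurePreserving φ μ (volume.restrict (Set.Icc (0:ℝ) 1)))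
    (hψ : MeasurePreserving ψ μ (volume.restrict (Set.Icc (0:ℝ) 1)))
    (heq : ∀ᵐ x ∂μ, D (φ x) = D₁ (ψ x)) :
    ∀ᵐ x ∂(volume.restrict (Set.Icc (0:ℝ) 1)), D₁ x = D x := by
  classical
  have hDmono : MonotoneOn D (Set.Icc (0:ℝ) 1) := hDstrict.monotoneOn
  set S : ℝ → Set ℝ := fun t => Icc (0:ℝ) 1 ∩ D ⁻¹' Iic t with hSdef
  set S₁ : ℝ → Set ℝ := fun t => Icc (0:ℝ) 1 ∩ D₁ ⁻¹' Iic t with hS₁def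
  have hSm : ∀ t, MeasurableSet (S t) := by
    intro t
    refine Set.OrdConnected.measurableSet ⟨?_⟩
    rintro a ⟨ha, hat⟩ b ⟨hb, hbt⟩ c hc
    have hcI : c ∈ Icc (0:ℝ) 1 := ⟨ha.1.trans hc.1, hc.2.trans hb.2⟩
    exact ⟨hcI, le_trans (hDmono hcI hb hc.2) hbt⟩
  have hS₁m : ∀ t, MeasurableSet (S₁ t) := by
    intro t
    refine Set.OrdConnected.measurableSet ⟨?_⟩
    rintro a ⟨ha, hat⟩ b ⟨hb, hbt⟩ c hc
    have hcI : c ∈ Icc (0:ℝ) 1 := ⟨ha.1.trans hc.1, hc.2.trans hb.2⟩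
    exact ⟨hcI, le_trans (hD₁mono hcI hb hc.2) hbt⟩
  have hSdown : ∀ t x y, x ∈ Icc (0:ℝ) 1 → y ∈ S t → x ≤ y → x ∈ S t := by
    rintro t x y hx ⟨hy, hyt⟩ hxy
    exact ⟨hx, le_trans (hDmono hx hy hxy) hyt⟩
  have hS₁down : ∀ t x y, x ∈ Icc (0:ℝ) 1 → y ∈ S₁ t → x ≤ y → x ∈ S₁ t := by
    rintro t x y hx ⟨hy, hyt⟩ hxy
    exact ⟨hx, le_trans (hD₁mono hx hy hxy) hyt⟩
  have hfin : ∀ t, volume (S t) ≠ ⊤ := by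
    intro t
    have : volume (S t) ≤ volume (Icc (0:ℝ) 1) := measure_mono inter_subset_left
    exact ne_top_of_le_ne_top (by simp [Real.volume_Icc]) this
  -- φ and ψ land in [0,1] a.e.
  have hφmem : ∀ᵐ x ∂μ, φ x ∈ Icc (0:ℝ) 1 := by
    have h0 : μ (φ ⁻¹' (Icc (0:ℝ) 1)ᶜ) = 0 := by
      rw [hφ.measure_preimage measurableSet_Icc.compl.nullMeasurableSet,
        Measure.restrict_apply measurableSet_Icc.compl, compl_inter_self]
      simp
    exact (measure_eq_zero_iff_ae_notMem.mp h0).mono fun x hx => not_not.mp hx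
  have hψmem : ∀ᵐ x ∂μ, ψ x ∈ Icc (0:ℝ) 1 := by
    have h0 : μ (ψ ⁻¹' (Icc (0:ℝ) 1)ᶜ) = 0 := by
      rw [hψ.measure_preimage measurableSet_Icc.compl.nullMeasurableSet,
        Measure.restrict_apply measurableSet_Icc.compl, compl_inter_self]
      simp
    exact (measure_eq_zero_iff_ae_notMem.mp h0).mono fun x hx => not_not.mp hx
  -- equal distributions
  have hmeq : ∀ t, volume (S t) = volume (S₁ t) := by
    intro t
    have hcongr : (φ ⁻¹' S t : Set Ω) =ᵐ[μ] (ψ ⁻¹' S₁ t) := by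
      rw [Filter.eventuallyEq_set]
      filter_upwards [heq, hφmem, hψmem] with x hx h1 h2
      simp only [mem_preimage, hSdef, hS₁def, mem_inter_iff, mem_preimage, mem_Iic]
      rw [hx]
      exact ⟨fun h => ⟨h2, h.2⟩, fun h => ⟨h1, h.2⟩⟩
    have e1 : μ (φ ⁻¹' S t) = volume (S t) := by
      rw [hφ.measure_preimage (hSm t).nullMeasurableSet,
        Measure.restrict_apply (hSm t), inter_eq_left.mpr inter_subset_left]
    have e2 : μ (ψ ⁻¹' S₁ t) = volume (S₁ t) := by
      rw [hψ.measure_preimage (hS₁m t).nullMeasurableSet,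
        Measure.restrict_apply (hS₁m t), inter_eq_left.mpr inter_subset_left]
    rw [← e1, ← e2]
    exact measure_congr hcongr
  set m : ℝ → ℝ := fun t => (volume (S t)).toReal with hm
  -- membership facts
  have fact1 : ∀ t x, x ∈ S t → x ≤ m t := by
    intro t x hx
    have hsub : Icc (0:ℝ) x ⊆ S t := by
      intro z hz
      exact hSdown t z x ⟨hz.1, hz.2.trans hx.1.2⟩ hx hz.2
    have : ENNReal.ofReal x ≤ volume (S t) := by
      calc ENNReal.ofReal x = volume (Icc (0:ℝ) x) := by simp [Real.volume_Icc]
        _ ≤ volume (S t) := measure_mono hsub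
    exact (ENNReal.ofReal_le_iff_le_toReal (hfin t)).mp this
  have fact2 : ∀ t x, x ∈ Icc (0:ℝ) 1 → x ∉ S t → m t ≤ x := by
    intro t x hxI hx
    have hsub : S t ⊆ Ico (0:ℝ) x := by
      intro z hz
      refine ⟨hz.1.1, ?_⟩
      by_contra hzx
      exact hx (hSdown t x z hxI hz (le_of_not_gt hzx))
    have : volume (S t) ≤ ENNReal.ofReal x := by
      calc volume (S t) ≤ volume (Ico (0:ℝ) x) := measure_mono hsub
        _ = ENNReal.ofReal x := by simp [Real.volume_Ico]
    exact ENNReal.toReal_le_of_le_ofReal hxI.1 this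
  have fact1' : ∀ t x, x ∈ S₁ t → x ≤ m t := by
    intro t x hx
    have hsub : Icc (0:ℝ) x ⊆ S₁ t := by
      intro z hz
      exact hS₁down t z x ⟨hz.1, hz.2.trans hx.1.2⟩ hx hz.2
    have : ENNReal.ofReal x ≤ volume (S t) := by
      calc ENNReal.ofReal x = volume (Icc (0:ℝ) x) := by simp [Real.volume_Icc]
        _ ≤ volume (S₁ t) := measure_mono hsub
        _ = volume (S t) := (hmeq t).symm
    exact (ENNReal.ofReal_le_iff_le_toReal (hfin t)).mp this
  have fact2' : ∀ t x, x ∈ Icc (0:ℝ) 1 → x ∉ S₁ t → m t ≤ x := by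
    intro t x hxI hx
    have hsub : S₁ t ⊆ Ico (0:ℝ) x := by
      intro z hz
      refine ⟨hz.1.1, ?_⟩
      by_contra hzx
      exact hx (hS₁down t x z hxI hz (le_of_not_gt hzx))
    have : volume (S t) ≤ ENNReal.ofReal x := by
      calc volume (S t) = volume (S₁ t) := hmeq t
        _ ≤ volume (Ico (0:ℝ) x) := measure_mono hsub
        _ = ENNReal.ofReal x := by simp [Real.volume_Ico]
    exact ENNReal.toReal_le_of_le_ofReal hxI.1 this
  -- countable exceptional set
  set N : Set ℝ := Set.range (fun q : ℚ => m q) with hN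
  have hNnull : volume N = 0 := (Set.countable_range _).measure_zero _
  have hae : ∀ᵐ x ∂volume, x ∉ N := measure_eq_zero_iff_ae_notMem.mp hNnull
  rw [ae_restrict_iff' measurableSet_Icc]
  filter_upwards [hae] with x hxN hxI
  by_contra hne
  rcases lt_or_gt_of_ne hne with h | h
  · -- D₁ x < D x
    obtain ⟨t, ht1, ht2⟩ := exists_rat_btwn h
    have hxS₁ : x ∈ S₁ (t : ℝ) := ⟨hxI, le_of_lt ht1⟩
    have hxS : x ∉ S (t : ℝ) := fun hc => absurd hc.2 (not_le.mpr ht2)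
    exact hxN ⟨t, le_antisymm (fact2 t x hxI hxS) (fact1' t x hxS₁)⟩
  · -- D x < D₁ x
    obtain ⟨t, ht1, ht2⟩ := exists_rat_btwn h
    have hxS : x ∈ S (t : ℝ) := ⟨hxI, le_of_lt ht1⟩
    have hxS₁ : x ∉ S₁ (t : ℝ) := fun hc => absurd hc.2 (not_le.mpr ht2)
    exact hxN ⟨t, le_antisymm (fact2' t x hxI hxS₁) (fact1 t x hxS)⟩
end

section
/- Let W, W₁ be graphons on [0,1] with degree functions D, D₁, let (Ω,μ) be a probability space and φ, ψ : Ω → [0,1] measure-preserving maps such that W(φ(x),φ(y)) = W₁(ψ(x),ψ(y)) for μ²-a.e. (x,y). Suppose D₁(x) = x/4 a.e. and h(φ(x)) = h₁(ψ(x)) μ-a.e., where h, h₁ are defined by h(x) = Leb{y : W(x,y) ∉ {0,1/2}} and similarly for h₁. Then for all 0 < a < b < 1, ∫_a^b h₁(x) dx = ∫₀¹ h(x)·𝟙[a/4 < D(x) < b/4] dx. -/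
open MeasureTheory Set

theorem stmt17 {Ω : Type*} [MeasurableSpace Ω] (μ : Measure Ω) [IsProbabilityMeasure μ]
    (W W₁ : ℝ → ℝ → ℝ) (hW : IsGraphon W) (hW₁ : IsGraphon W₁)
    (D D₁ : ℝ → ℝ)
    (hD : ∀ x, D x = ∫ y in Set.Icc (0:ℝ) 1, W x y)
    (hD₁ : ∀ x, D₁ x = ∫ y in Set.Icc (0:ℝ) 1, W₁ x y)
    (h h₁ : ℝ → ℝ)
    (hh : ∀ x, h x = (volume {y ∈ Set.Icc (0:ℝ) 1 | W x y ∉ ({0, 1/2} : Set ℝ)}).toReal)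
    (hh₁ : ∀ x, h₁ x = (volume {y ∈ Set.Icc (0:ℝ) 1 | W₁ x y ∉ ({0, 1/2} : Set ℝ)}).toReal)
    (φ ψ : Ω → ℝ)
    (hφ : MeasurePreserving φ μ (volume.restrict (Set.Icc (0:ℝ) 1)))
    (hψ : MeasurePreserving ψ μ (volume.restrict (Set.Icc (0:ℝ) 1)))
    (heq : ∀ᵐ p ∂(μ.prod μ), W (φ p.1) (φ p.2) = W₁ (ψ p.1) (ψ p.2))
    (hD₁eq : ∀ᵐ x ∂(volume.restrict (Set.Icc (0:ℝ) 1)), D₁ x = x / 4)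
    (hheq : ∀ᵐ x ∂μ, h (φ x) = h₁ (ψ x)) :
    ∀ a b : ℝ, 0 < a → a < b → b < 1 →
      ∫ x in a..b, h₁ x
        = ∫ x in Set.Icc (0:ℝ) 1,
            h x * Set.indicator {x : ℝ | a/4 < D x ∧ D x < b/4} (fun _ => (1:ℝ)) x := by

  intro a b ha hab hb
  -- measurability of D
  have hDm : Measurable D := by
    have hm : Measurable fun x => ∫ y in Icc (0:ℝ) 1, W x y :=
      hW.1.stronglyMeasurable.integral_prod_right'.measurable
    exact (funext hD : D = _) ▸ hm
  have hSm : MeasurableSet (({0, 1/2} : Set ℝ)ᶜ) :=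
    (by measurability : MeasurableSet ({0, 1/2} : Set ℝ)).compl
  have hhm : Measurable h := by
    have hTm : MeasurableSet {p : ℝ × ℝ | p.2 ∈ Icc (0:ℝ) 1 ∧
        Function.uncurry W p ∉ ({0, 1/2} : Set ℝ)} :=
      (measurable_snd measurableSet_Icc).inter (hW.1 hSm)
    have hm : Measurable fun x => (volume (Prod.mk x ⁻¹' {p : ℝ × ℝ | p.2 ∈ Icc (0:ℝ) 1 ∧
        Function.uncurry W p ∉ ({0, 1/2} : Set ℝ)})).toReal :=
      (measurable_measure_prodMk_left hTm).ennreal_toReal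
    exact (funext hh : h = _) ▸ hm
  have hh₁m : Measurable h₁ := by
    have hTm : MeasurableSet {p : ℝ × ℝ | p.2 ∈ Icc (0:ℝ) 1 ∧
        Function.uncurry W₁ p ∉ ({0, 1/2} : Set ℝ)} :=
      (measurable_snd measurableSet_Icc).inter (hW₁.1 hSm)
    have hm : Measurable fun x => (volume (Prod.mk x ⁻¹' {p : ℝ × ℝ | p.2 ∈ Icc (0:ℝ) 1 ∧
        Function.uncurry W₁ p ∉ ({0, 1/2} : Set ℝ)})).toReal :=
      (measurable_measure_prodMk_left hTm).ennreal_toReal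
    exact (funext hh₁ : h₁ = _) ▸ hm
  set Sab := {x : ℝ | a/4 < D x ∧ D x < b/4} with hSab
  have hSabm : MeasurableSet Sab :=
    (measurableSet_lt measurable_const hDm).inter (measurableSet_lt hDm measurable_const)
  -- D (φ x) = D₁ (ψ x) a.e.
  have hDeq : ∀ᵐ x ∂μ, D (φ x) = D₁ (ψ x) := by
    filter_upwards [MeasureTheory.Measure.ae_ae_of_ae_prod heq] with x hx
    have e1 : D (φ x) = ∫ y, W (φ x) (φ y) ∂μ := by
      rw [hD, ← hφ.map_eq,
        integral_map hφ.measurable.aemeasurable hW.1.of_uncurry_left.aestronglyMeasurable]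
    have e2 : D₁ (ψ x) = ∫ y, W₁ (ψ x) (ψ y) ∂μ := by
      rw [hD₁, ← hψ.map_eq,
        integral_map hψ.measurable.aemeasurable hW₁.1.of_uncurry_left.aestronglyMeasurable]
    rw [e1, e2]
    exact integral_congr_ae hx
  have hD₁ψ : ∀ᵐ x ∂μ, D₁ (ψ x) = ψ x / 4 := by
    rw [← hψ.map_eq] at hD₁eq
    exact ae_of_ae_map hψ.measurable.aemeasurable hD₁eq
  -- pointwise a.e. identity
  have hptwise : ∀ᵐ x ∂μ, h (φ x) * Sab.indicator (fun _ => (1:ℝ)) (φ x)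
      = h₁ (ψ x) * (Ioo a b).indicator (fun _ => (1:ℝ)) (ψ x) := by
    filter_upwards [hheq, hDeq, hD₁ψ] with x hx1 hx2 hx3
    rw [hx1]
    congr 1
    rw [Set.indicator_apply, Set.indicator_apply]
    have hiff : φ x ∈ Sab ↔ ψ x ∈ Ioo a b := by
      simp only [hSab, mem_setOf_eq, mem_Ioo, hx2, hx3]
      constructor <;> rintro ⟨h1, h2⟩ <;> constructor <;> linarith
    exact if_congr hiff rfl rfl
  have hmi₁ : Measurable fun t => h₁ t * (Ioo a b).indicator (fun _ => (1:ℝ)) t :=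
    hh₁m.mul (measurable_const.indicator measurableSet_Ioo)
  have hmi : Measurable fun t => h t * Sab.indicator (fun _ => (1:ℝ)) t :=
    hhm.mul (measurable_const.indicator hSabm)
  have hIoosub : Ioo a b ⊆ Icc (0:ℝ) 1 :=
    Ioo_subset_Icc_self.trans (Icc_subset_Icc ha.le hb.le)
  calc ∫ x in a..b, h₁ x
      = ∫ x in Ioo a b, h₁ x := by
        rw [intervalIntegral.integral_of_le hab.le, integral_Ioc_eq_integral_Ioo]
    _ = ∫ x in Icc (0:ℝ) 1, (Ioo a b).indicator h₁ x := by
        rw [integral_indicator measurableSet_Ioo,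
          Measure.restrict_restrict measurableSet_Ioo, inter_eq_left.mpr hIoosub]
    _ = ∫ x in Icc (0:ℝ) 1, h₁ x * (Ioo a b).indicator (fun _ => (1:ℝ)) x := by
        refine setIntegral_congr_fun measurableSet_Icc fun x _ => ?_
        by_cases hx : x ∈ Ioo a b <;> simp [Set.indicator_apply, hx]
    _ = ∫ x, h₁ (ψ x) * (Ioo a b).indicator (fun _ => (1:ℝ)) (ψ x) ∂μ := by
        rw [← hψ.map_eq, integral_map hψ.measurable.aemeasurable hmi₁.aestronglyMeasurable]
    _ = ∫ x, h (φ x) * Sab.indicator (fun _ => (1:ℝ)) (φ x) ∂μ :=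
        (integral_congr_ae hptwise).symm
    _ = ∫ x in Icc (0:ℝ) 1, h x * Sab.indicator (fun _ => (1:ℝ)) x := by
        rw [← hφ.map_eq, integral_map hφ.measurable.aemeasurable hmi.aestronglyMeasurable]
end
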